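/- In the Gaussian mixture model, the adversarial gap of f(x) = sgn(w^⊤x) (assuming w^⊤θ* ≥ 0) equals AG_ε(f) = Pr_{Z∼N(0,1)}[(w^⊤θ* - ε‖w‖_q)/√(w^⊤Σ*w) ≤ Z ≤ w^⊤θ*/√(w^⊤Σ*w)], and this satisfies AG_ε(f) ≤ Pr_{Z∼N(0,1)}[(w^⊤θ* - ε‖w‖_q)/√(w^⊤Σ*w) ≤ Z ≤ (w^⊤θ* + ε‖w‖_q)/√(w^⊤Σ*w)] ≤ 2·AG_ε(f). -/

import Mathlib

open Finset MeasureTheory ProbabilityTheory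
open scoped ENNReal

/-- Dot product on `ℝᵈ`. -/
noncomputable def dotp {d : ℕ} (a b : Fin d → ℝ) : ℝ := ∑ i, a i * b i

/-- The `ℓ_p` norm on `ℝᵈ`. -/
noncomputable def lpnorm {d : ℕ} (p : ℝ) (a : Fin d → ℝ) : ℝ :=
  (∑ i, |a i| ^ p) ^ (1 / p)

/-- The sign function: `sg r = 1` if `r ≥ 0`, `-1` otherwise. -/
noncomputable def sg (r : ℝ) : ℝ := if 0 ≤ r then 1 else -1

/-- `ν` is the multivariate Gaussian `N(θ, S)`, characterized by all its one-dimensional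
projections: for every `w`, `wᵀX ∼ N(wᵀθ, wᵀSw)`. -/
def IsGaussianVec {d : ℕ} (θ : Fin d → ℝ) (S : Matrix (Fin d) (Fin d) ℝ)
    (ν : Measure (Fin d → ℝ)) : Prop :=
  ∀ w : Fin d → ℝ,
    ν.map (fun x => dotp w x)
      = gaussianReal (dotp w θ) (Real.toNNReal (dotp w (S.mulVec w)))

/-- The Gaussian mixture model: `y ∼ Unif{-1,+1}`, `x | y ∼ N(y θ, S)`; the joint law of
`(x, y)` on `ℝᵈ × ℝ`. -/
noncomputable def mixture {d : ℕ} (νpos νneg : Measure (Fin d → ℝ)) :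
    Measure ((Fin d → ℝ) × ℝ) :=
  (2 : ℝ≥0∞)⁻¹ • (νpos.map (fun x => (x, (1 : ℝ))))
    + (2 : ℝ≥0∞)⁻¹ • (νneg.map (fun x => (x, (-1 : ℝ))))

/-- The adversarial gap `AG_ε(f) = AdvRisk_ε(f) - Risk(f)` of `f(x) = sgn(wᵀx)` in the
Gaussian mixture model with `ℓ_p`-bounded adversary. -/
noncomputable def advGap {d : ℕ} (νpos νneg : Measure (Fin d → ℝ))
    (w : Fin d → ℝ) (p ε : ℝ) : ℝ :=
  (mixture νpos νneg
      {t | ∃ x', lpnorm p (fun i => x' i - t.1 i) ≤ ε ∧ sg (dotp w x') ≠ t.2}).toReal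
    - (mixture νpos νneg {t | sg (dotp w t.1) ≠ t.2}).toReal

open scoped NNReal

lemma lpnorm_nonneg {d : ℕ} (p : ℝ) (a : Fin d → ℝ) : 0 ≤ lpnorm p a := by
  unfold lpnorm
  apply Real.rpow_nonneg
  exact Finset.sum_nonneg fun i _ => Real.rpow_nonneg (abs_nonneg _) _

lemma lpnorm_zero {d : ℕ} {p : ℝ} (hp : 0 < p) :
    lpnorm p (fun _ : Fin d => (0:ℝ)) = 0 := by
  unfold lpnorm
  simp only [abs_zero, Real.zero_rpow hp.ne', Finset.sum_const_zero]
  rw [Real.zero_rpow (by positivity : 1/p ≠ 0)]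

lemma lpnorm_neg {d : ℕ} (p : ℝ) (a : Fin d → ℝ) :
    lpnorm p (fun i => -a i) = lpnorm p a := by
  unfold lpnorm; simp

lemma lpnorm_smul {d : ℕ} {p : ℝ} (hp : 0 < p) {t : ℝ} (ht : 0 ≤ t) (a : Fin d → ℝ) :
    lpnorm p (fun i => t * a i) = t * lpnorm p a := by
  unfold lpnorm
  have h1 : ∀ i : Fin d, |t * a i| ^ p = t ^ p * |a i| ^ p := by
    intro i
    rw [abs_mul, abs_of_nonneg ht, Real.mul_rpow ht (abs_nonneg _)]
  simp_rw [h1, ← Finset.mul_sum]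
  rw [Real.mul_rpow (by positivity) (Finset.sum_nonneg fun i _ => by positivity),
    ← Real.rpow_mul ht, mul_one_div, div_self hp.ne', Real.rpow_one]

lemma dotp_sub {d : ℕ} (w a b : Fin d → ℝ) :
    dotp w (fun i => a i - b i) = dotp w a - dotp w b := by
  unfold dotp; rw [← Finset.sum_sub_distrib]; congr 1; ext i; ring

lemma dotp_smul {d : ℕ} (w : Fin d → ℝ) (t : ℝ) (a : Fin d → ℝ) :
    dotp w (fun i => t * a i) = t * dotp w a := by
  unfold dotp; rw [Finset.mul_sum]; congr 1; ext i; ring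

lemma holder {d : ℕ} {p q : ℝ} (hp : 1 < p) (hpq : 1/p + 1/q = 1)
    (w u : Fin d → ℝ) : dotp w u ≤ lpnorm q w * lpnorm p u := by
  have hcq : Real.HolderConjugate p q := ⟨by rw [inv_one, ← one_div, ← one_div]; exact hpq, by linarith,
    one_div_pos.mp (by have := (div_lt_one (by linarith : (0:ℝ) < p)).mpr hp; linarith)⟩
  have := Real.inner_le_Lp_mul_Lq (s := Finset.univ) u w hcq
  unfold dotp lpnorm
  calc ∑ i, w i * u i = ∑ i, u i * w i := by congr 1; ext i; ring
    _ ≤ _ := by rw [mul_comm]; exact this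

lemma conj_gt {p q : ℝ} (hp : 1 ≤ p) (hq : 1 ≤ q) (hpq : 1/p + 1/q = 1) : 1 < p := by
  have hp0 : 0 < p := by linarith
  have hq0 : 0 < q := by linarith
  have h1 : 0 < 1/q := by positivity
  have : 1/p < 1 := by linarith
  rw [div_lt_one hp0] at this; exact this

lemma conj_eq {p q : ℝ} (hp : 1 < p) (hq : 1 < q) (hpq : 1/p + 1/q = 1) :
    (q - 1) * p = q := by
  have hp0 : p ≠ 0 := by linarith
  have hq0 : q ≠ 0 := by linarith
  field_simp at hpq
  linarith

lemma mul_sign_self (x : ℝ) : x * Real.sign x = |x| := by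
  rcases lt_trichotomy x 0 with h | h | h
  · rw [Real.sign_of_neg h, abs_of_neg h]; ring
  · simp [h]
  · rw [Real.sign_of_pos h, abs_of_pos h]; ring

lemma extremal {d : ℕ} {p q : ℝ} (hp : 1 < p) (hq : 1 < q) (hpq : 1/p + 1/q = 1)
    {w : Fin d → ℝ} (hw : w ≠ 0) :
    ∃ v : Fin d → ℝ, lpnorm p v = 1 ∧ dotp w v = lpnorm q w := by
  obtain ⟨i0, hi0⟩ := Function.ne_iff.mp hw
  have hqp : (q - 1) * p = q := conj_eq hp hq hpq
  set T : ℝ := ∑ i, |w i| ^ q with hT_def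
  have hT : 0 < T := by
    apply Finset.sum_pos' (fun i _ => Real.rpow_nonneg (abs_nonneg _) _)
    exact ⟨i0, Finset.mem_univ _, Real.rpow_pos_of_pos (abs_pos.mpr hi0) _⟩
  set N : ℝ := T ^ (1/q) with hN_def
  have hN : 0 < N := Real.rpow_pos_of_pos hT _
  have hNq : N ^ q = T := by
    rw [hN_def, ← Real.rpow_mul hT.le, one_div, inv_mul_cancel₀ (by linarith : q ≠ 0),
      Real.rpow_one]
  have hlpq : lpnorm q w = N := rfl
  refine ⟨fun i => Real.sign (w i) * (|w i| ^ (q-1) / N ^ (q-1)), ?_, ?_⟩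
  · have habs : ∀ i : Fin d, |Real.sign (w i) * (|w i| ^ (q-1) / N ^ (q-1))|
        = |w i| ^ (q-1) / N ^ (q-1) := by
      intro i
      by_cases h : w i = 0
      · rw [h]; simp [Real.zero_rpow (by linarith : q - 1 ≠ 0)]
      · rw [abs_mul, abs_of_nonneg (div_nonneg (Real.rpow_nonneg (abs_nonneg _) _)
          (Real.rpow_nonneg hN.le _))]
        rcases lt_trichotomy (w i) 0 with h' | h' | h'
        · rw [Real.sign_of_neg h']; norm_num
        · exact absurd h' h
        · rw [Real.sign_of_pos h']; norm_num
    unfold lpnorm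
    have hterm : ∀ i : Fin d, |Real.sign (w i) * (|w i| ^ (q-1) / N ^ (q-1))| ^ p
        = |w i| ^ q / N ^ q := by
      intro i
      rw [habs i, Real.div_rpow (Real.rpow_nonneg (abs_nonneg _) _) (Real.rpow_nonneg hN.le _),
        ← Real.rpow_mul (abs_nonneg _), ← Real.rpow_mul hN.le, hqp]
    simp_rw [hterm, ← Finset.sum_div, ← hT_def, hNq, div_self hT.ne']
    rw [Real.one_rpow]
  · unfold dotp
    have hterm : ∀ i : Fin d, w i * (Real.sign (w i) * (|w i| ^ (q-1) / N ^ (q-1)))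
        = |w i| ^ q / N ^ (q-1) := by
      intro i
      have h1 : |w i| * |w i| ^ (q-1) = |w i| ^ q := by
        have h2 := Real.rpow_add' (abs_nonneg (w i))
          (by intro hcon; linarith : (1:ℝ) + (q-1) ≠ 0)
        rw [Real.rpow_one] at h2
        rw [← h2]; congr 1; ring
      rw [← mul_assoc, mul_sign_self, ← mul_div_assoc, h1]
    simp_rw [hterm, ← Finset.sum_div, ← hT_def, ← hNq, hlpq]
    rw [← Real.rpow_sub hN, show q - (q-1) = 1 by ring, Real.rpow_one]


lemma sg_ne_one_iff {r : ℝ} : sg r ≠ 1 ↔ r < 0 := by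
  unfold sg; split_ifs with h
  · simpa using not_lt.mpr h
  · push_neg at h; norm_num; linarith

lemma sg_ne_neg_one_iff {r : ℝ} : sg r ≠ -1 ↔ 0 ≤ r := by
  unfold sg; split_ifs with h
  · norm_num; exact h
  · push_neg at h; simp; linarith

lemma adv_pos_iff {d : ℕ} {p q : ℝ} (hp : 1 < p) (hq : 1 < q) (hpq : 1/p + 1/q = 1)
    {w : Fin d → ℝ} (hw : w ≠ 0) {ε : ℝ} (hε : 0 ≤ ε) (x : Fin d → ℝ) :
    (∃ x', lpnorm p (fun i => x' i - x i) ≤ ε ∧ dotp w x' < 0)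
      ↔ dotp w x < ε * lpnorm q w := by
  constructor
  · rintro ⟨x', hle, hneg⟩
    have h1 : dotp w (fun i => x i - x' i) ≤ lpnorm q w * lpnorm p (fun i => x i - x' i) :=
      holder hp hpq w _
    have h2 : lpnorm p (fun i => x i - x' i) = lpnorm p (fun i => x' i - x i) := by
      rw [← lpnorm_neg p (fun i => x' i - x i)]; congr 1; ext i; ring
    have h3 : dotp w (fun i => x i - x' i) = dotp w x - dotp w x' := dotp_sub w x x'
    have h4 : lpnorm q w * lpnorm p (fun i => x i - x' i) ≤ lpnorm q w * ε := by
      rw [h2]; exact mul_le_mul_of_nonneg_left hle (lpnorm_nonneg _ _)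
    nlinarith [lpnorm_nonneg q w]
  · intro hlt
    obtain ⟨v, hv1, hv2⟩ := extremal hp hq hpq hw
    refine ⟨fun i => x i - ε * v i, ?_, ?_⟩
    · have : (fun i => (x i - ε * v i) - x i) = fun i => -(ε * v i) := by ext i; ring
      rw [this, lpnorm_neg, lpnorm_smul (by linarith) hε, hv1, mul_one]
    · have : (fun i => x i - ε * v i) = (fun i => x i - (ε * v i)) := rfl
      rw [show dotp w (fun i => x i - ε * v i) = dotp w x - dotp w (fun i => ε * v i) from
        dotp_sub w x _, dotp_smul, hv2]
      linarith

lemma adv_neg_iff {d : ℕ} {p q : ℝ} (hp : 1 < p) (hq : 1 < q) (hpq : 1/p + 1/q = 1)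
    {w : Fin d → ℝ} (hw : w ≠ 0) {ε : ℝ} (hε : 0 ≤ ε) (x : Fin d → ℝ) :
    (∃ x', lpnorm p (fun i => x' i - x i) ≤ ε ∧ 0 ≤ dotp w x')
      ↔ -(ε * lpnorm q w) ≤ dotp w x := by
  constructor
  · rintro ⟨x', hle, hpos⟩
    have h1 : dotp w (fun i => x' i - x i) ≤ lpnorm q w * lpnorm p (fun i => x' i - x i) :=
      holder hp hpq w _
    have h3 : dotp w (fun i => x' i - x i) = dotp w x' - dotp w x := dotp_sub w x' x
    have h4 : lpnorm q w * lpnorm p (fun i => x' i - x i) ≤ lpnorm q w * ε :=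
      mul_le_mul_of_nonneg_left hle (lpnorm_nonneg _ _)
    nlinarith [lpnorm_nonneg q w]
  · intro hlt
    obtain ⟨v, hv1, hv2⟩ := extremal hp hq hpq hw
    refine ⟨fun i => x i + ε * v i, ?_, ?_⟩
    · have : (fun i => (x i + ε * v i) - x i) = fun i => ε * v i := by ext i; ring
      rw [this, lpnorm_smul (by linarith) hε, hv1, mul_one]
    · have h5 : dotp w (fun i => x i + ε * v i)
          = dotp w x + dotp w (fun i => ε * v i) := by
        unfold dotp; rw [← Finset.sum_add_distrib]; congr 1; ext i; ring
      rw [h5, dotp_smul, hv2]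
      linarith

lemma Iio_diff_Iio' {a b : ℝ} : Set.Iio b \ Set.Iio a = Set.Ico a b := by
  ext x; simp [Set.mem_Ico, not_lt, and_comm]

lemma measurable_dotp {d : ℕ} (w : Fin d → ℝ) : Measurable (fun x => dotp w x) := by
  unfold dotp
  exact Finset.measurable_sum _ (fun i _ => (measurable_pi_apply i).const_mul _)

lemma measurable_sg : Measurable sg := by
  unfold sg
  exact Measurable.ite measurableSet_Ici measurable_const measurable_const

lemma gauss_std (m : ℝ) (v : ℝ≥0) (hv : v ≠ 0) :
    gaussianReal m v
      = (gaussianReal 0 1).map (fun x => Real.sqrt v * x + m) := by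
  have h1 : (gaussianReal 0 1).map (fun x => Real.sqrt v * x) = gaussianReal 0 v := by
    have h0 := gaussianReal_map_const_mul (μ := 0) (v := 1) (Real.sqrt v)
    have hvv : (NNReal.mk ((Real.sqrt v)^2) (sq_nonneg _)) * 1 = v := by
      ext; simp [Real.sq_sqrt (NNReal.coe_nonneg v)]
    rw [hvv, mul_zero] at h0
    exact h0
  have h2 : (fun x => Real.sqrt v * x + m)
      = (fun x => x + m) ∘ (fun x => Real.sqrt v * x) := rfl
  rw [h2, ← Measure.map_map (by fun_prop : Measurable fun x : ℝ => x + m)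
    (by fun_prop : Measurable fun x : ℝ => Real.sqrt v * x), h1,
    gaussianReal_map_add_const m, zero_add]

lemma gauss_Iio (m s a : ℝ) (hs : 0 < s) :
    gaussianReal m s.toNNReal (Set.Iio a)
      = gaussianReal 0 1 (Set.Iio ((a - m) / Real.sqrt s)) := by
  have hv : s.toNNReal ≠ 0 := by
    simp [Real.toNNReal_eq_zero, not_le, hs]
  have hc : (s.toNNReal : ℝ) = s := Real.coe_toNNReal s hs.le
  have hσ : 0 < Real.sqrt s := Real.sqrt_pos.mpr hs
  rw [gauss_std m _ hv, Measure.map_apply (by fun_prop) measurableSet_Iio]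
  congr 1
  ext x
  simp only [Set.mem_preimage, Set.mem_Iio, hc]
  rw [lt_div_iff₀ hσ]
  constructor <;> intro h <;> nlinarith

lemma gauss_Ici (m s a : ℝ) (hs : 0 < s) :
    gaussianReal m s.toNNReal (Set.Ici a)
      = gaussianReal 0 1 (Set.Ici ((a - m) / Real.sqrt s)) := by
  have hv : s.toNNReal ≠ 0 := by
    simp [Real.toNNReal_eq_zero, not_le, hs]
  have hc : (s.toNNReal : ℝ) = s := Real.coe_toNNReal s hs.le
  have hσ : 0 < Real.sqrt s := Real.sqrt_pos.mpr hs
  rw [gauss_std m _ hv, Measure.map_apply (by fun_prop) measurableSet_Ici]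
  congr 1
  ext x
  simp only [Set.mem_preimage, Set.mem_Ici, hc]
  rw [div_le_iff₀ hσ]
  constructor <;> intro h <;> nlinarith

lemma gauss_map_neg :
    (gaussianReal 0 1).map (fun x => -x) = gaussianReal 0 1 := by
  have h0 := gaussianReal_map_const_mul (μ := 0) (v := 1) (-1 : ℝ)
  have hvv : (NNReal.mk ((-1 : ℝ)^2) (sq_nonneg _)) * 1 = 1 := by ext; norm_num
  rw [hvv, mul_zero, show ((fun x => (-1 : ℝ) * x)) = (fun x : ℝ => -x) from
    funext fun x => by ring] at h0
  exact h0

lemma gauss_atom (x : ℝ) : gaussianReal 0 1 {x} = 0 :=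
  gaussianReal_absolutelyContinuous 0 one_ne_zero (measure_singleton x)

instance : NullSingletonClass (gaussianReal 0 1) := ⟨fun x => gauss_atom x⟩

lemma gauss_Ici_reflect (a : ℝ) :
    gaussianReal 0 1 (Set.Ici a) = gaussianReal 0 1 (Set.Iic (-a)) := by
  nth_rewrite 1 [← gauss_map_neg]
  rw [Measure.map_apply measurable_neg measurableSet_Ici]
  congr 1
  ext x
  simp only [Set.mem_preimage, Set.mem_Ici, Set.mem_Iic]
  constructor <;> intro h <;> linarith

lemma gauss_Icc_reflect (a b : ℝ) :
    gaussianReal 0 1 (Set.Icc a b) = gaussianReal 0 1 (Set.Icc (-b) (-a)) := by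
  nth_rewrite 1 [← gauss_map_neg]
  rw [Measure.map_apply measurable_neg measurableSet_Icc]
  congr 1
  ext x
  simp only [Set.mem_preimage, Set.mem_Icc]
  constructor <;> intro h <;> constructor <;> linarith

lemma gauss_Iic_eq_Iio (a : ℝ) :
    gaussianReal 0 1 (Set.Iic a) = gaussianReal 0 1 (Set.Iio a) :=
  (measure_congr (Iio_ae_eq_Iic (a := a) (μ := gaussianReal 0 1))).symm

lemma gauss_Ico_eq_Icc (a b : ℝ) :
    gaussianReal 0 1 (Set.Ico a b) = gaussianReal 0 1 (Set.Icc a b) :=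
  measure_congr (Ico_ae_eq_Icc)

lemma gauss_toReal_Ioc (a b : ℝ) (hab : a ≤ b) :
    (gaussianReal 0 1 (Set.Ioc a b)).toReal = ∫ x in a..b, gaussianPDFReal 0 1 x := by
  rw [gaussianReal_apply_eq_integral 0 one_ne_zero,
    ENNReal.toReal_ofReal (setIntegral_nonneg measurableSet_Ioc
      fun x _ => gaussianPDFReal_nonneg 0 1 x),
    intervalIntegral.integral_of_le hab]

lemma pdf_anti {x y : ℝ} (h : x^2 ≤ y^2) :
    gaussianPDFReal 0 1 y ≤ gaussianPDFReal 0 1 x := by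
  unfold gaussianPDFReal
  apply mul_le_mul_of_nonneg_left _ (by positivity)
  apply Real.exp_le_exp.mpr
  simp only [sub_zero, NNReal.coe_one, mul_one]
  linarith

lemma gauss_intervalIntegrable (a b : ℝ) :
    IntervalIntegrable (gaussianPDFReal 0 1) volume a b :=
  (integrable_gaussianPDFReal 0 1).intervalIntegrable

lemma key_le (a b : ℝ) (hab : a ≤ b) (hb : 0 ≤ b) :
    (gaussianReal 0 1 (Set.Ioc b (2*b - a))).toReal
      ≤ (gaussianReal 0 1 (Set.Icc a b)).toReal := by
  have hb' : b ≤ 2*b - a := by linarith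
  rw [gauss_toReal_Ioc b (2*b-a) hb']
  have hIcc : (gaussianReal 0 1 (Set.Icc a b)).toReal
      = ∫ x in a..b, gaussianPDFReal 0 1 x := by
    rw [← measure_congr (Ioc_ae_eq_Icc (a := a) (b := b) (μ := gaussianReal 0 1)),
      gauss_toReal_Ioc a b hab]
  rw [hIcc]
  have hrefl : (∫ x in b..(2*b - a), gaussianPDFReal 0 1 x)
      = ∫ x in a..b, gaussianPDFReal 0 1 (2*b - x) := by
    have h := intervalIntegral.integral_comp_sub_left (a := a) (b := b)
      (gaussianPDFReal 0 1) (2*b)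
    rw [show 2*b - b = b by ring] at h
    exact h.symm
  rw [hrefl]
  apply intervalIntegral.integral_mono_on hab ?_ (gauss_intervalIntegrable a b) ?_
  · have h := (gauss_intervalIntegrable (2*b - a) (2*b - b)).comp_sub_left (2*b)
    rw [show 2*b - (2*b - a) = a by ring, show 2*b - (2*b - b) = b by ring] at h
    exact h
  · intro x hx
    apply pdf_anti
    nlinarith [hx.1, hx.2]

lemma mixture_apply {d : ℕ} (νpos νneg : Measure (Fin d → ℝ))
    {E : Set ((Fin d → ℝ) × ℝ)} (hE : MeasurableSet E) :
    mixture νpos νneg E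
      = 2⁻¹ * νpos ((fun x => (x, (1:ℝ)))⁻¹' E) + 2⁻¹ * νneg ((fun x => (x, (-1:ℝ)))⁻¹' E) := by
  unfold mixture
  rw [Measure.add_apply, Measure.smul_apply, Measure.smul_apply, smul_eq_mul, smul_eq_mul,
    Measure.map_apply (by fun_prop : Measurable fun x : Fin d → ℝ => (x, (1:ℝ))) hE,
    Measure.map_apply (by fun_prop : Measurable fun x : Fin d → ℝ => (x, (-1:ℝ))) hE]

lemma half_half (X : ℝ≥0∞) : 2⁻¹ * X + 2⁻¹ * X = X := by
  rw [← add_mul]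
  have : (2:ℝ≥0∞)⁻¹ + 2⁻¹ = 1 := by
    rw [← two_mul, ENNReal.mul_inv_cancel (by norm_num) (by norm_num)]
  rw [this, one_mul]

lemma dotp_negvec {d : ℕ} (w θ : Fin d → ℝ) : dotp w (fun i => -θ i) = -dotp w θ := by
  unfold dotp; rw [← Finset.sum_neg_distrib]; congr 1; ext i; ring

lemma risk_eq {d : ℕ} {θ : Fin d → ℝ} {S : Matrix (Fin d) (Fin d) ℝ}
    {νpos νneg : Measure (Fin d → ℝ)}
    (hpos : IsGaussianVec θ S νpos) (hneg : IsGaussianVec (fun i => -θ i) S νneg)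
    (w : Fin d → ℝ) (hS : 0 < dotp w (S.mulVec w)) :
    mixture νpos νneg {t | sg (dotp w t.1) ≠ t.2}
      = gaussianReal 0 1
          (Set.Iio ((0 - dotp w θ) / Real.sqrt (dotp w (S.mulVec w)))) := by
  have hmeas : MeasurableSet {t : (Fin d → ℝ) × ℝ | sg (dotp w t.1) ≠ t.2} := by
    have h0 : {t : (Fin d → ℝ) × ℝ | sg (dotp w t.1) ≠ t.2}
        = {t : (Fin d → ℝ) × ℝ | sg (dotp w t.1) = t.2}ᶜ := rfl
    rw [h0]
    exact (measurableSet_eq_fun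
      (measurable_sg.comp ((measurable_dotp w).comp measurable_fst)) measurable_snd).compl
  rw [mixture_apply νpos νneg hmeas]
  have h1 : (fun x : Fin d → ℝ => (x,(1:ℝ)))⁻¹' {t | sg (dotp w t.1) ≠ t.2}
      = (fun x => dotp w x) ⁻¹' (Set.Iio 0) := by
    ext x; exact sg_ne_one_iff
  have h2 : (fun x : Fin d → ℝ => (x,(-1:ℝ)))⁻¹' {t | sg (dotp w t.1) ≠ t.2}
      = (fun x => dotp w x) ⁻¹' (Set.Ici 0) := by
    ext x; exact sg_ne_neg_one_iff
  rw [h1, h2, ← Measure.map_apply (measurable_dotp w) measurableSet_Iio,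
    ← Measure.map_apply (measurable_dotp w) measurableSet_Ici, hpos w, hneg w,
    dotp_negvec w θ, gauss_Iio _ _ _ hS, gauss_Ici _ _ _ hS,
    show (0 - -dotp w θ) / Real.sqrt (dotp w (S.mulVec w))
      = -((0 - dotp w θ) / Real.sqrt (dotp w (S.mulVec w))) by ring,
    gauss_Ici_reflect, neg_neg, gauss_Iic_eq_Iio, half_half]

lemma advrisk_eq {d : ℕ} {θ : Fin d → ℝ} {S : Matrix (Fin d) (Fin d) ℝ}
    {νpos νneg : Measure (Fin d → ℝ)}
    (hpos : IsGaussianVec θ S νpos) (hneg : IsGaussianVec (fun i => -θ i) S νneg)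
    (w : Fin d → ℝ) (hS : 0 < dotp w (S.mulVec w))
    {p q ε : ℝ} (hp1 : 1 < p) (hq1 : 1 < q) (hpq : 1/p + 1/q = 1)
    (hw0 : w ≠ 0) (hε : 0 ≤ ε) :
    mixture νpos νneg
        {t | ∃ x', lpnorm p (fun i => x' i - t.1 i) ≤ ε ∧ sg (dotp w x') ≠ t.2}
      = gaussianReal 0 1
          (Set.Iio ((ε * lpnorm q w - dotp w θ) / Real.sqrt (dotp w (S.mulVec w)))) := by
  have hAB : {t : (Fin d → ℝ) × ℝ |
        ∃ x', lpnorm p (fun i => x' i - t.1 i) ≤ ε ∧ sg (dotp w x') ≠ t.2}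
      = {t : (Fin d → ℝ) × ℝ | (t.2 = 1 → dotp w t.1 < ε * lpnorm q w)
          ∧ (t.2 = -1 → -(ε * lpnorm q w) ≤ dotp w t.1)} := by
    ext ⟨x, y⟩
    simp only [Set.mem_setOf_eq]
    constructor
    · rintro ⟨x', h1, h2⟩
      constructor
      · rintro rfl
        exact (adv_pos_iff hp1 hq1 hpq hw0 hε x).mp ⟨x', h1, sg_ne_one_iff.mp h2⟩
      · rintro rfl
        exact (adv_neg_iff hp1 hq1 hpq hw0 hε x).mp ⟨x', h1, sg_ne_neg_one_iff.mp h2⟩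
    · rintro ⟨h1, h2⟩
      by_cases hy1 : y = 1
      · subst hy1
        obtain ⟨x', ha, hb⟩ := (adv_pos_iff hp1 hq1 hpq hw0 hε x).mpr (h1 rfl)
        exact ⟨x', ha, sg_ne_one_iff.mpr hb⟩
      by_cases hy2 : y = -1
      · subst hy2
        obtain ⟨x', ha, hb⟩ := (adv_neg_iff hp1 hq1 hpq hw0 hε x).mpr (h2 rfl)
        exact ⟨x', ha, sg_ne_neg_one_iff.mpr hb⟩
      · refine ⟨x, ?_, ?_⟩
        · have h0 : (fun i => x i - x i) = (fun _ : Fin d => (0:ℝ)) := by ext i; ring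
          rw [h0, lpnorm_zero (by linarith : (0:ℝ) < p)]
          exact hε
        · unfold sg; split_ifs
          · exact fun h => hy1 h.symm
          · exact fun h => hy2 h.symm
  rw [hAB]
  have hm1 : MeasurableSet {t : (Fin d → ℝ) × ℝ | t.2 = 1 → dotp w t.1 < ε * lpnorm q w} := by
    have h0 : {t : (Fin d → ℝ) × ℝ | t.2 = 1 → dotp w t.1 < ε * lpnorm q w}
        = (Prod.snd ⁻¹' {(1:ℝ)})ᶜ
          ∪ ((fun t : (Fin d → ℝ) × ℝ => dotp w t.1) ⁻¹' Set.Iio (ε * lpnorm q w)) := by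
      ext t; simp [imp_iff_not_or]
    rw [h0]
    exact (measurable_snd (measurableSet_singleton 1)).compl.union
      (((measurable_dotp w).comp measurable_fst) measurableSet_Iio)
  have hm2 : MeasurableSet {t : (Fin d → ℝ) × ℝ | t.2 = -1 → -(ε * lpnorm q w) ≤ dotp w t.1} := by
    have h0 : {t : (Fin d → ℝ) × ℝ | t.2 = -1 → -(ε * lpnorm q w) ≤ dotp w t.1}
        = (Prod.snd ⁻¹' {(-1:ℝ)})ᶜ
          ∪ ((fun t : (Fin d → ℝ) × ℝ => dotp w t.1) ⁻¹' Set.Ici (-(ε * lpnorm q w))) := by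
      ext t; simp [imp_iff_not_or]
    rw [h0]
    exact (measurable_snd (measurableSet_singleton (-1))).compl.union
      (((measurable_dotp w).comp measurable_fst) measurableSet_Ici)
  have hmeas : MeasurableSet {t : (Fin d → ℝ) × ℝ | (t.2 = 1 → dotp w t.1 < ε * lpnorm q w)
      ∧ (t.2 = -1 → -(ε * lpnorm q w) ≤ dotp w t.1)} := hm1.inter hm2
  rw [mixture_apply νpos νneg hmeas]
  have h1 : (fun x : Fin d → ℝ => (x,(1:ℝ)))⁻¹'
        {t : (Fin d → ℝ) × ℝ | (t.2 = 1 → dotp w t.1 < ε * lpnorm q w)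
          ∧ (t.2 = -1 → -(ε * lpnorm q w) ≤ dotp w t.1)}
      = (fun x => dotp w x) ⁻¹' Set.Iio (ε * lpnorm q w) := by
    ext x
    simp only [Set.mem_preimage, Set.mem_setOf_eq, Set.mem_Iio]
    norm_num
  have h2 : (fun x : Fin d → ℝ => (x,(-1:ℝ)))⁻¹'
        {t : (Fin d → ℝ) × ℝ | (t.2 = 1 → dotp w t.1 < ε * lpnorm q w)
          ∧ (t.2 = -1 → -(ε * lpnorm q w) ≤ dotp w t.1)}
      = (fun x => dotp w x) ⁻¹' Set.Ici (-(ε * lpnorm q w)) := by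
    ext x
    simp only [Set.mem_preimage, Set.mem_setOf_eq, Set.mem_Ici]
    norm_num
  rw [h1, h2, ← Measure.map_apply (measurable_dotp w) measurableSet_Iio,
    ← Measure.map_apply (measurable_dotp w) measurableSet_Ici, hpos w, hneg w,
    dotp_negvec w θ, gauss_Iio _ _ _ hS, gauss_Ici _ _ _ hS,
    show (-(ε * lpnorm q w) - -dotp w θ) / Real.sqrt (dotp w (S.mulVec w))
      = -((ε * lpnorm q w - dotp w θ) / Real.sqrt (dotp w (S.mulVec w))) by ring,
    gauss_Ici_reflect, neg_neg, gauss_Iic_eq_Iio, half_half]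

/-- In the Gaussian mixture model (with `wᵀθ* ≥ 0`), the adversarial gap of
`f(x) = sgn(wᵀx)` equals `Pr[(wᵀθ* - ε‖w‖_q)/s ≤ Z ≤ wᵀθ*/s]` where `s = √(wᵀΣ*w)`, and
`AG_ε(f) ≤ Pr[(wᵀθ* - ε‖w‖_q)/s ≤ Z ≤ (wᵀθ* + ε‖w‖_q)/s] ≤ 2 · AG_ε(f)`. -/
theorem gaussian_mixture_advGap {d : ℕ} (θ : Fin d → ℝ) (S : Matrix (Fin d) (Fin d) ℝ)
    (νpos νneg : Measure (Fin d → ℝ)) [IsProbabilityMeasure νpos] [IsProbabilityMeasure νneg]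
    (hpos : IsGaussianVec θ S νpos) (hneg : IsGaussianVec (fun i => -θ i) S νneg)
    (w : Fin d → ℝ) (hw : lpnorm 2 w = 1) (hS : 0 < dotp w (S.mulVec w))
    (hwθ : 0 ≤ dotp w θ)
    (p q : ℝ) (hp : 1 ≤ p) (hq : 1 ≤ q) (hpq : 1 / p + 1 / q = 1)
    (ε : ℝ) (hε : 0 ≤ ε) :
    advGap νpos νneg w p ε
        = (gaussianReal 0 1 (Set.Icc
            ((dotp w θ - ε * lpnorm q w) / Real.sqrt (dotp w (S.mulVec w)))
            (dotp w θ / Real.sqrt (dotp w (S.mulVec w))))).toReal ∧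
      advGap νpos νneg w p ε
        ≤ (gaussianReal 0 1 (Set.Icc
            ((dotp w θ - ε * lpnorm q w) / Real.sqrt (dotp w (S.mulVec w)))
            ((dotp w θ + ε * lpnorm q w) / Real.sqrt (dotp w (S.mulVec w))))).toReal ∧
      (gaussianReal 0 1 (Set.Icc
            ((dotp w θ - ε * lpnorm q w) / Real.sqrt (dotp w (S.mulVec w)))
            ((dotp w θ + ε * lpnorm q w) / Real.sqrt (dotp w (S.mulVec w))))).toReal
        ≤ 2 * advGap νpos νneg w p ε := by
  have hp1 : 1 < p := conj_gt hp hq hpq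
  have hq1 : 1 < q := conj_gt hq hp (by linarith)
  have hw0 : w ≠ 0 := by
    intro h
    rw [h, show (0 : Fin d → ℝ) = (fun _ => 0) from rfl,
      lpnorm_zero (by norm_num : (0:ℝ) < 2)] at hw
    norm_num at hw
  have hσ : 0 < Real.sqrt (dotp w (S.mulVec w)) := Real.sqrt_pos.mpr hS
  have hcnn : 0 ≤ ε * lpnorm q w := mul_nonneg hε (lpnorm_nonneg _ _)
  have hAdv := advrisk_eq hpos hneg w hS hp1 hq1 hpq hw0 hε
  have hRisk := risk_eq hpos hneg w hS
  set σ := Real.sqrt (dotp w (S.mulVec w)) with hσdef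
  have hle : (0 - dotp w θ) / σ ≤ (ε * lpnorm q w - dotp w θ) / σ := by
    gcongr
  have hgap : advGap νpos νneg w p ε
      = (gaussianReal 0 1 (Set.Icc ((dotp w θ - ε * lpnorm q w) / σ)
          (dotp w θ / σ))).toReal := by
    unfold advGap
    rw [hAdv, hRisk,
      ← ENNReal.toReal_sub_of_le (measure_mono (Set.Iio_subset_Iio hle)) (measure_ne_top _ _),
      ← measure_diff (Set.Iio_subset_Iio hle) measurableSet_Iio.nullMeasurableSet
        (measure_ne_top _ _),
      Iio_diff_Iio', gauss_Ico_eq_Icc, gauss_Icc_reflect,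
      show -((ε * lpnorm q w - dotp w θ) / σ) = (dotp w θ - ε * lpnorm q w) / σ by ring,
      show -((0 - dotp w θ) / σ) = dotp w θ / σ by ring]
  have hab : (dotp w θ - ε * lpnorm q w) / σ ≤ dotp w θ / σ := by
    gcongr
    linarith
  have hbc : dotp w θ / σ ≤ (dotp w θ + ε * lpnorm q w) / σ := by
    gcongr
    linarith
  have hdisj : Disjoint (Set.Icc ((dotp w θ - ε * lpnorm q w) / σ) (dotp w θ / σ))
      (Set.Ioc (dotp w θ / σ) ((dotp w θ + ε * lpnorm q w) / σ)) :=
    Set.disjoint_left.mpr (fun x hx hx2 => absurd hx.2 (not_le.mpr hx2.1))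
  have hsplit : gaussianReal 0 1 (Set.Icc ((dotp w θ - ε * lpnorm q w) / σ)
        ((dotp w θ + ε * lpnorm q w) / σ))
      = gaussianReal 0 1 (Set.Icc ((dotp w θ - ε * lpnorm q w) / σ) (dotp w θ / σ))
        + gaussianReal 0 1 (Set.Ioc (dotp w θ / σ) ((dotp w θ + ε * lpnorm q w) / σ)) := by
    rw [← Set.Icc_union_Ioc_eq_Icc hab hbc, measure_union hdisj measurableSet_Ioc]
  have hkey : (gaussianReal 0 1 (Set.Ioc (dotp w θ / σ)
        ((dotp w θ + ε * lpnorm q w) / σ))).toReal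
      ≤ (gaussianReal 0 1 (Set.Icc ((dotp w θ - ε * lpnorm q w) / σ)
          (dotp w θ / σ))).toReal := by
    rw [show (dotp w θ + ε * lpnorm q w) / σ
        = 2 * (dotp w θ / σ) - (dotp w θ - ε * lpnorm q w) / σ by ring]
    exact key_le _ _ hab (div_nonneg hwθ hσ.le)
  refine ⟨hgap, ?_, ?_⟩
  · rw [hgap, hsplit, ENNReal.toReal_add (measure_ne_top _ _) (measure_ne_top _ _)]
    exact le_add_of_nonneg_right ENNReal.toReal_nonneg
  · rw [hgap, hsplit, ENNReal.toReal_add (measure_ne_top _ _) (measure_ne_top _ _)]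
    linarith [hkey]
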